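/- Let G be the group presented by generators x₁,…,x₅ with relations [x₄,x₁] = 1, [x₅,x₂] = 1, x₄x₃x₂ = x₃x₂x₄ = x₂x₄x₃, and x₅·(x₂⁻¹x₃x₂)·x₁ = (x₂⁻¹x₃x₂)·x₁·x₅ = x₁·x₅·(x₂⁻¹x₃x₂). Then the quotient of G by the normal closure of the five elements x₄x₃x₂, x₅x₂, x₄x₁, x₅(x₂⁻¹x₃x₂)x₁, and (x₂x₁)⁻¹x₃(x₂x₁)x₅x₄ is isomorphic to the infinite dihedral group ⟨a,b | a² = (ba)² = 1⟩. -/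

import Mathlib

open scoped commutatorElement

namespace Quadrilateral

/-- Generators x₁,…,x₅ of the free group on 5 letters. -/
def x (i : Fin 5) : FreeGroup (Fin 5) := FreeGroup.of i

/-- The word x₂⁻¹x₃x₂. -/
def w : FreeGroup (Fin 5) := (x 1)⁻¹ * x 2 * x 1

/-- Randell's relations for the complement of the complete quadrilateral:
[x₄,x₁], [x₅,x₂], x₄x₃x₂ = x₃x₂x₄ = x₂x₄x₃ and
x₅(x₂⁻¹x₃x₂)x₁ = (x₂⁻¹x₃x₂)x₁x₅ = x₁x₅(x₂⁻¹x₃x₂). -/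
def quadRels : Set (FreeGroup (Fin 5)) :=
  {⁅x 3, x 0⁆, ⁅x 4, x 1⁆,
   (x 3 * x 2 * x 1) * (x 2 * x 1 * x 3)⁻¹,
   (x 2 * x 1 * x 3) * (x 1 * x 3 * x 2)⁻¹,
   (x 4 * w * x 0) * (w * x 0 * x 4)⁻¹,
   (w * x 0 * x 4) * (x 0 * x 4 * w)⁻¹}

/-- The fundamental group of the complement of the complete quadrilateral. -/
abbrev G := PresentedGroup quadRels

/-- The images in G of the generators. -/
def g (i : Fin 5) : G := PresentedGroup.of i

/-- The image in G of x₂⁻¹x₃x₂. -/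
def gw : G := (g 1)⁻¹ * g 2 * g 1

/-- The five singular meridians γ_{p₁},…,γ_{p₅}. -/
def meridians : Set G :=
  {g 3 * g 2 * g 1, g 4 * g 1, g 3 * g 0, g 4 * gw * g 0,
   (g 1 * g 0)⁻¹ * g 2 * (g 1 * g 0) * g 4 * g 3}

/-- Relations of the infinite dihedral presentation ⟨a, b | a², (ba)²⟩. -/
def dihedralRels : Set (FreeGroup (Fin 2)) :=
  {(FreeGroup.of 0) ^ 2, (FreeGroup.of 1 * FreeGroup.of 0) ^ 2}

/-! ### Auxiliary material -/

abbrev D := PresentedGroup dihedralRels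

def a : D := PresentedGroup.of 0
def b : D := PresentedGroup.of 1

lemma mk_rel {α : Type*} {rels : Set (FreeGroup α)} {r : FreeGroup α} (h : r ∈ rels) :
    PresentedGroup.mk rels r = 1 :=
  (QuotientGroup.eq_one_iff _).2 (Subgroup.subset_normalClosure h)

lemma ha : a * a = 1 := by
  have : PresentedGroup.mk dihedralRels ((FreeGroup.of 0) ^ 2) = 1 :=
    mk_rel (by simp [dihedralRels])
  simpa [sq, map_mul, a, PresentedGroup.of] using this

lemma hba : (b * a) * (b * a) = 1 := by
  have : PresentedGroup.mk dihedralRels ((FreeGroup.of 1 * FreeGroup.of 0) ^ 2) = 1 :=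
    mk_rel (by simp [dihedralRels])
  simpa [sq, map_mul, a, b, PresentedGroup.of, mul_assoc] using this

lemma inv_a : a⁻¹ = a := inv_eq_of_mul_eq_one_right ha
lemma inv_ba : (b * a)⁻¹ = b * a := inv_eq_of_mul_eq_one_right hba

lemma r_aa (y : D) : a * (a * y) = y := by rw [← mul_assoc, ha, one_mul]

lemma bab : b * a * b = a⁻¹ :=
  eq_inv_of_mul_eq_one_left (by rw [← hba]; group)

lemma r_ab : a * b = b⁻¹ * a := by
  calc a * b = b⁻¹ * (b * a * b) := by group
  _ = b⁻¹ * a := by rw [bab, inv_a]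

lemma r_ab' : a * b⁻¹ = b * a := by
  calc a * b⁻¹ = (b * a⁻¹)⁻¹ := by group
  _ = b * a := by rw [inv_a, inv_ba]

lemma r_ab_x (y : D) : a * (b * y) = b⁻¹ * (a * y) := by
  rw [← mul_assoc, r_ab, mul_assoc]

lemma r_ab'_x (y : D) : a * (b⁻¹ * y) = b * (a * y) := by
  rw [← mul_assoc, r_ab', mul_assoc]

/-- The images of the five generators in the infinite dihedral group. -/
def f5 : Fin 5 → D := ![a, b * a, b⁻¹, a⁻¹, (b * a)⁻¹]

lemma f5_0 : f5 0 = a := rfl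
lemma f5_1 : f5 1 = b * a := rfl
lemma f5_2 : f5 2 = b⁻¹ := rfl
lemma f5_3 : f5 3 = a⁻¹ := rfl
lemma f5_4 : f5 4 = (b * a)⁻¹ := rfl

lemma lift_rels : ∀ r ∈ quadRels, FreeGroup.lift f5 r = 1 := by
  intro r hr
  simp only [quadRels, Set.mem_insert_iff, Set.mem_singleton_iff] at hr
  rcases hr with rfl | rfl | rfl | rfl | rfl | rfl <;>
    simp [x, w, commutatorElement_def, map_mul, map_inv, FreeGroup.lift_apply_of,
      f5_0, f5_1, f5_2, f5_3, f5_4,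
      mul_assoc, inv_a, ha, r_aa, r_ab, r_ab', r_ab_x, r_ab'_x, inv_ba]

/-- The homomorphism G →* D. -/
def φ₁ : G →* D := PresentedGroup.toGroup lift_rels

lemma φ₁_g (i : Fin 5) : φ₁ (g i) = f5 i := PresentedGroup.toGroup.of lift_rels

lemma φ₁_meridians : ∀ m ∈ meridians, φ₁ m = 1 := by
  intro m hm
  simp only [meridians, Set.mem_insert_iff, Set.mem_singleton_iff] at hm
  rcases hm with rfl | rfl | rfl | rfl | rfl <;>
    simp [gw, map_mul, map_inv, φ₁_g, f5_0, f5_1, f5_2, f5_3, f5_4,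
      mul_assoc, inv_a, ha, r_aa, r_ab, r_ab', r_ab_x, r_ab'_x, inv_ba]

/-- The quotient map G →* Q. -/
def P : G →* G ⧸ Subgroup.normalClosure meridians :=
  QuotientGroup.mk' (Subgroup.normalClosure meridians)

lemma P_meridians : ∀ m ∈ meridians, P m = 1 := fun m hm =>
  (QuotientGroup.eq_one_iff _).2 (Subgroup.subset_normalClosure hm)

lemma hm1 : P (g 3) * P (g 2) * P (g 1) = 1 := by
  have := P_meridians (g 3 * g 2 * g 1) (by simp [meridians])
  simpa [map_mul] using this

lemma hm2 : P (g 4) * P (g 1) = 1 := by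
  have := P_meridians (g 4 * g 1) (by simp [meridians])
  simpa [map_mul] using this

lemma hm3 : P (g 3) * P (g 0) = 1 := by
  have := P_meridians (g 3 * g 0) (by simp [meridians])
  simpa [map_mul] using this

lemma hm4 : P (g 4) * ((P (g 1))⁻¹ * P (g 2) * P (g 1)) * P (g 0) = 1 := by
  have := P_meridians (g 4 * gw * g 0) (by simp [meridians])
  simpa [gw, map_mul, map_inv, mul_assoc] using this

lemma hm5 : (P (g 1) * P (g 0))⁻¹ * P (g 2) * (P (g 1) * P (g 0)) * P (g 4) * P (g 3) = 1 := by
  have := P_meridians ((g 1 * g 0)⁻¹ * g 2 * (g 1 * g 0) * g 4 * g 3) (by simp [meridians])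
  simpa [map_mul, map_inv, mul_assoc] using this

lemma e3 : P (g 3) = (P (g 0))⁻¹ := eq_inv_of_mul_eq_one_left hm3
lemma e4 : P (g 4) = (P (g 1))⁻¹ := eq_inv_of_mul_eq_one_left hm2

lemma e2 : P (g 2) = P (g 0) * (P (g 1))⁻¹ := by
  have h : P (g 2) = (P (g 3))⁻¹ * (P (g 3) * P (g 2) * P (g 1) * (P (g 1))⁻¹) := by group
  rw [hm1] at h
  rw [h, e3, inv_inv]
  group

lemma s1 : P (g 0) * P (g 0) = P (g 1) * P (g 1) := by
  set u := P (g 0); set v := P (g 1)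
  have h4 := hm4
  rw [e4, e2] at h4
  -- h4 : v⁻¹ * (v⁻¹ * (u * v⁻¹) * v) * u = 1
  have h : v⁻¹ * (v⁻¹ * (u * u)) = 1 := by
    rw [← h4]; simp only [u, v]; group
  calc u * u = v * (v * (v⁻¹ * (v⁻¹ * (u * u)))) := by group
  _ = v * (v * 1) := by rw [h]
  _ = v * v := by group

lemma q1sq : P (g 1) * P (g 1) = 1 := by
  set u := P (g 0); set v := P (g 1)
  have h5 := hm5
  rw [e2, e3, e4] at h5
  -- h5 : (v*u)⁻¹ * (u * v⁻¹) * (v*u) * v⁻¹ * u⁻¹ = 1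
  have h7 : v⁻¹ * (u * u) * v⁻¹ = u * u := by
    calc v⁻¹ * (u * u) * v⁻¹
        = u * ((v * u)⁻¹ * (u * v⁻¹) * (v * u) * v⁻¹ * u⁻¹) * u := by group
    _ = u * 1 * u := by rw [h5]
    _ = u * u := by group
  rw [s1] at h7
  rw [← h7]; simp only [v]; group

lemma q0sq : P (g 0) * P (g 0) = 1 := by rw [s1]; exact q1sq

/-- The images of the two dihedral generators in the quotient. -/
def f2 : Fin 2 → (G ⧸ Subgroup.normalClosure meridians) := ![P (g 0), P (g 1) * P (g 0)]

lemma lift_drels : ∀ r ∈ dihedralRels, FreeGroup.lift f2 r = 1 := by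
  intro r hr
  simp only [dihedralRels, Set.mem_insert_iff, Set.mem_singleton_iff] at hr
  rcases hr with rfl | rfl
  · simpa [sq, map_mul, f2, FreeGroup.lift_apply_of] using q0sq
  · have : (P (g 1) * P (g 0)) * P (g 0) = P (g 1) := by
      rw [mul_assoc, q0sq, mul_one]
    simp only [sq, map_mul, FreeGroup.lift_apply_of, f2]
    show (P (g 1) * P (g 0) * P (g 0)) * (P (g 1) * P (g 0) * P (g 0)) = 1
    rw [this]; exact q1sq

/-- The homomorphism D →* Q. -/
def ψ : D →* G ⧸ Subgroup.normalClosure meridians := PresentedGroup.toGroup lift_drels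

lemma ψ_a : ψ a = P (g 0) := PresentedGroup.toGroup.of lift_drels
lemma ψ_b : ψ b = P (g 1) * P (g 0) := PresentedGroup.toGroup.of lift_drels

/-- The homomorphism Q →* D. -/
def φ : (G ⧸ Subgroup.normalClosure meridians) →* D :=
  QuotientGroup.lift (Subgroup.normalClosure meridians) φ₁
    (fun m hm => Subgroup.normalClosure_le_normal
      (fun y hy => MonoidHom.mem_ker.2 (φ₁_meridians y hy)) hm)

lemma φ_P (z : G) : φ (P z) = φ₁ z := rfl

lemma q1inv : (P (g 1))⁻¹ = P (g 1) := inv_eq_of_mul_eq_one_right q1sq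
lemma q0inv : (P (g 0))⁻¹ = P (g 0) := inv_eq_of_mul_eq_one_right q0sq

lemma left_inv : (ψ.comp φ).comp P = P := by
  have : (ψ.comp φ).comp P = ψ.comp φ₁ := rfl
  rw [this]
  apply PresentedGroup.ext
  intro i
  show ψ (φ₁ (g i)) = P (g i)
  rw [φ₁_g]
  fin_cases i
  · show ψ (f5 0) = P (g 0)
    rw [f5_0, ψ_a]
  · show ψ (f5 1) = P (g 1)
    rw [f5_1, map_mul, ψ_a, ψ_b, mul_assoc, q0sq, mul_one]
  · show ψ (f5 2) = P (g 2)
    rw [f5_2, map_inv, ψ_b, e2, mul_inv_rev, q0inv, q1inv]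
  · show ψ (f5 3) = P (g 3)
    rw [f5_3, map_inv, ψ_a, e3]
  · show ψ (f5 4) = P (g 4)
    rw [f5_4, map_inv, map_mul, ψ_a, ψ_b, mul_assoc, q0sq, mul_one, e4]

lemma right_inv : φ.comp ψ = MonoidHom.id D := by
  apply PresentedGroup.ext
  intro i
  fin_cases i
  · show φ (ψ a) = a
    rw [ψ_a, φ_P, φ₁_g, f5_0]
  · show φ (ψ b) = b
    rw [ψ_b, map_mul, φ_P, φ_P, φ₁_g, φ₁_g, f5_0, f5_1, mul_assoc, ha, mul_one]

theorem lac_surface_pi1_iso_dihedral :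
    Nonempty ((G ⧸ Subgroup.normalClosure meridians) ≃* PresentedGroup dihedralRels) := by
  have h1 : ψ.comp φ = MonoidHom.id _ :=
    QuotientGroup.monoidHom_ext _ left_inv
  refine ⟨{ toFun := φ, invFun := ψ, map_mul' := map_mul φ,
            left_inv := fun z => DFunLike.congr_fun h1 z,
            right_inv := fun z => DFunLike.congr_fun right_inv z }⟩

end Quadrilateral
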